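/- Let (x^k)_{k ≥ −1} be a cDCA sequence with x⁰ ∈ dom g, and suppose F is level-bounded (for every r ∈ ℝ the set {x ∈ ℝⁿ : F(x) ≤ r} is bounded). Then the limits lim_{k→∞} F(x^k) and lim_{k→∞} E(x^k, x^{k−1}) both exist and are equal, and for every accumulation point x̂ of (x^k) one has lim_{k→∞} F(x^k) = lim_{k→∞} E(x^k, x^{k−1}) = F(x̂). -/

import Mathlib

open Set Filter Topology
open scoped InnerProductSpace

noncomputable section

abbrev Euc (n : ℕ) := EuclideanSpace ℝ (Fin n)

/-- The subdifferential of a real-valued function `h` at `u`. -/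
def SubdiffR {n : ℕ} (h : Euc n → ℝ) (u : Euc n) : Set (Euc n) :=
  {ξ | ∀ z, h u + ⟪ξ, z - u⟫_ℝ ≤ h z}

/-- Convexity for extended-real-valued functions. -/
def ConvexEReal {n : ℕ} (g : Euc n → EReal) : Prop :=
  ∀ x y : Euc n, ∀ a b : ℝ, 0 ≤ a → 0 ≤ b → a + b = 1 →
    g (a • x + b • y) ≤ (a : EReal) * g x + (b : EReal) * g y

/-- `g` is proper: nowhere `⊥` and somewhere finite. -/
def ProperE {n : ℕ} (g : Euc n → EReal) : Prop :=
  (∀ x, g x ≠ ⊥) ∧ ∃ x, g x ≠ ⊤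

/-- `P` is the proximal mapping of `g`: for every `α > 0` and every `x`, `P α x` is
the unique minimizer over `ℝⁿ` of `y ↦ g y + (1/(2α)) ‖x - y‖²`. -/
def IsProx {n : ℕ} (g : Euc n → EReal) (P : ℝ → Euc n → Euc n) : Prop :=
  ∀ α : ℝ, 0 < α → ∀ x p, P α x = p ↔
    (∀ y, g p + ((1/(2*α) * ‖x - p‖^2 : ℝ) : EReal) ≤ g y + ((1/(2*α) * ‖x - y‖^2 : ℝ) : EReal))

/-- A cDCA sequence, indexed so that `x 0 = x⁻¹` and `x (k+1) = xᵏ` for `k ≥ 0`: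
for every `k ≥ 0` there exist `ηᵏ ∈ ∂h(xᵏ)` and `yᵏ` with
`x^{k+1} = Prox_{μg}((1-μλ)yᵏ - μ∇f(yᵏ) + μλxᵏ + μηᵏ)` and
`‖x^{k+1} - yᵏ‖ ≤ δ‖x^{k-1} - xᵏ‖`. -/
def IsCDCA {n : ℕ} (f' : Euc n → Euc n) (h : Euc n → ℝ) (P : ℝ → Euc n → Euc n)
    (lam mu δ : ℝ) (x : ℕ → Euc n) : Prop :=
  ∀ k : ℕ, ∃ η ∈ SubdiffR h (x (k+1)), ∃ y,
    x (k+2) = P mu ((1 - mu*lam) • y - mu • f' y + (mu*lam) • x (k+1) + mu • η) ∧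
    ‖x (k+2) - y‖ ≤ δ * ‖x k - x (k+1)‖

section Lemmas

variable {n : ℕ} {f : Euc n → ℝ} {f' : Euc n → Euc n} {Lf : ℝ}

lemma line_hasDerivAt (hfgrad : ∀ z, HasGradientAt f (f' z) z) (a v : Euc n) (t : ℝ) :
    HasDerivAt (fun s : ℝ => f (a + s • v)) ⟪f' (a + t • v), v⟫_ℝ t := by
  have h1 : HasDerivAt (fun s : ℝ => a + s • v) v t := by
    simpa using ((hasDerivAt_id (t:ℝ)).smul_const v).const_add a
  have h2 := (hfgrad (a + t • v)).hasFDerivAt.comp_hasDerivAt t h1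
  simp at h2; exact h2

/-- convexity gradient inequality -/
lemma grad_ineq (hfconv : ConvexOn ℝ Set.univ f) (hfgrad : ∀ z, HasGradientAt f (f' z) z)
    (a b : Euc n) : f a + ⟪f' a, b - a⟫_ℝ ≤ f b := by
  set v := b - a with hv
  have hder : HasDerivAt (fun s : ℝ => f (a + s • v)) ⟪f' a, v⟫_ℝ 0 := by
    simpa using line_hasDerivAt hfgrad a v 0
  have hlim := hder.tendsto_slope_zero_right
  have hev : ∀ᶠ t in 𝓝[>] (0:ℝ), t⁻¹ • (f (a + (0 + t) • v) - f (a + (0:ℝ) • v)) ≤ f b - f a := by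
    filter_upwards [Ioc_mem_nhdsGT_of_mem (by norm_num : (0:ℝ) ∈ Set.Ico (0:ℝ) 1)] with t ht
    have h01 : 0 ≤ 1 - t := by linarith [ht.2]
    have hcomb := hfconv.2 (mem_univ a) (mem_univ b) h01 (le_of_lt ht.1) (by ring)
    have hpt : (1 - t) • a + t • b = a + t • v := by
      simp [hv, smul_sub, sub_smul]; module
    rw [hpt] at hcomb
    have hs : t⁻¹ • (f (a + (0 + t) • v) - f (a + (0:ℝ) • v)) = (f (a + t • v) - f a) / t := by
      simp [smul_eq_mul, div_eq_inv_mul]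
    rw [hs, div_le_iff₀ ht.1]
    simp only [smul_eq_mul] at hcomb
    nlinarith [hcomb]
  have := le_of_tendsto hlim hev
  linarith

/-- descent lemma -/
lemma descent_ineq (hfgrad : ∀ z, HasGradientAt f (f' z) z)
    (hflip : ∀ z w, ‖f' z - f' w‖ ≤ Lf * ‖z - w‖)
    (a b : Euc n) : f b ≤ f a + ⟪f' a, b - a⟫_ℝ + Lf / 2 * ‖b - a‖ ^ 2 := by
  set v := b - a with hv
  set ψ : ℝ → ℝ := fun t => f (a + t • v) - t * ⟪f' a, v⟫_ℝ - Lf / 2 * t ^ 2 * ‖v‖ ^ 2 with hψ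
  have hder : ∀ t : ℝ, HasDerivAt ψ (⟪f' (a + t • v), v⟫_ℝ - ⟪f' a, v⟫_ℝ - Lf * t * ‖v‖ ^ 2) t := by
    intro t
    have h1 := line_hasDerivAt hfgrad a v t
    have h2 : HasDerivAt (fun s : ℝ => s * ⟪f' a, v⟫_ℝ) ⟪f' a, v⟫_ℝ t := by
      simpa using (hasDerivAt_id t).mul_const ⟪f' a, v⟫_ℝ
    have h3 : HasDerivAt (fun s : ℝ => Lf / 2 * s ^ 2 * ‖v‖ ^ 2) (Lf * t * ‖v‖ ^ 2) t := by
      have h4 : HasDerivAt (fun s : ℝ => s ^ 2) (2 * t) t := by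
        simpa using (hasDerivAt_pow 2 t)
      have := (h4.const_mul (Lf / 2)).mul_const (‖v‖ ^ 2)
      exact this.congr_deriv (by ring)
    exact (h1.sub h2).sub h3
  have hmono : ψ 1 ≤ ψ 0 := by
    have hcont : ContinuousOn ψ (Set.Icc 0 1) := fun t _ => ((hder t).continuousAt).continuousWithinAt
    have hle : ∀ t ∈ Set.Ioo (0:ℝ) 1,
        ⟪f' (a + t • v), v⟫_ℝ - ⟪f' a, v⟫_ℝ - Lf * t * ‖v‖ ^ 2 ≤ 0 := by
      intro t ht
      have hcs : ⟪f' (a + t • v) - f' a, v⟫_ℝ ≤ ‖f' (a + t • v) - f' a‖ * ‖v‖ :=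
        real_inner_le_norm _ _
      have hl : ‖f' (a + t • v) - f' a‖ ≤ Lf * (t * ‖v‖) := by
        have := hflip (a + t • v) a
        simpa [norm_smul, abs_of_pos ht.1] using this
      have hiv : ⟪f' (a + t • v), v⟫_ℝ - ⟪f' a, v⟫_ℝ = ⟪f' (a + t • v) - f' a, v⟫_ℝ := by
        rw [inner_sub_left]
      rw [hiv]
      nlinarith [norm_nonneg v, norm_nonneg (f' (a + t • v) - f' a), ht.1]
    have hdiff : DifferentiableOn ℝ ψ (interior (Set.Icc (0:ℝ) 1)) := by
      intro t _
      exact ((hder t).differentiableAt).differentiableWithinAt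
    have hanti := antitoneOn_of_deriv_nonpos (convex_Icc (0:ℝ) 1) hcont hdiff
      (by
        intro t ht
        rw [interior_Icc] at ht
        rw [(hder t).deriv]
        exact hle t ht)
      (by norm_num : (0:ℝ) ∈ Set.Icc (0:ℝ) 1) (by norm_num : (1:ℝ) ∈ Set.Icc (0:ℝ) 1) zero_le_one
    exact hanti
  have h0 : ψ 0 = f a := by simp [hψ]
  have h1 : ψ 1 = f b - ⟪f' a, v⟫_ℝ - Lf / 2 * ‖v‖ ^ 2 := by simp [hψ, hv]
  rw [h0, h1] at hmono
  linarith

/-- interpolation inequality for smooth convex functions -/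
lemma interp_ineq (hfconv : ConvexOn ℝ Set.univ f) (hfgrad : ∀ z, HasGradientAt f (f' z) z)
    (hflip : ∀ z w, ‖f' z - f' w‖ ≤ Lf * ‖z - w‖) (hLf : 0 < Lf)
    (a b : Euc n) :
    f a + ⟪f' a, b - a⟫_ℝ + 1 / (2 * Lf) * ‖f' b - f' a‖ ^ 2 ≤ f b := by
  set Δ := f' b - f' a with hΔ
  set z := b - (1 / Lf) • Δ with hz
  have h1 := grad_ineq hfconv hfgrad a z
  have h2 := descent_ineq hfgrad hflip b z
  have hzb : z - b = -((1 / Lf) • Δ) := by rw [hz]; abel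
  have e1 : ⟪f' b, z - b⟫_ℝ = -(1 / Lf) * ⟪f' b, Δ⟫_ℝ := by
    rw [hzb, inner_neg_right, real_inner_smul_right]; ring
  have e2 : ‖z - b‖ ^ 2 = (1 / Lf) ^ 2 * ‖Δ‖ ^ 2 := by
    rw [hzb, norm_neg, norm_smul, Real.norm_eq_abs, abs_of_pos (by positivity : (0:ℝ) < 1 / Lf)]
    ring
  have e3 : ⟪f' a, z - a⟫_ℝ = ⟪f' a, b - a⟫_ℝ - (1 / Lf) * ⟪f' a, Δ⟫_ℝ := by
    have : z - a = (b - a) - (1 / Lf) • Δ := by rw [hz]; abel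
    rw [this, inner_sub_right, real_inner_smul_right]
  have e4 : ⟪f' b, Δ⟫_ℝ - ⟪f' a, Δ⟫_ℝ = ‖Δ‖ ^ 2 := by
    rw [← inner_sub_left, ← hΔ, real_inner_self_eq_norm_sq]
  rw [e1, e2] at h2
  rw [e3] at h1
  have hLne : Lf ≠ 0 := ne_of_gt hLf
  have h5 : (1 / Lf) * ⟪f' b, Δ⟫_ℝ = (1 / Lf) * ‖Δ‖ ^ 2 + (1 / Lf) * ⟪f' a, Δ⟫_ℝ := by
    rw [show ⟪f' b, Δ⟫_ℝ = ‖Δ‖ ^ 2 + ⟪f' a, Δ⟫_ℝ by linarith [e4]]; ring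
  have h6 : Lf / 2 * ((1 / Lf) ^ 2 * ‖Δ‖ ^ 2) = 1 / (2 * Lf) * ‖Δ‖ ^ 2 := by
    field_simp
  have h7 : (1 / Lf) * ‖Δ‖ ^ 2 - 1 / (2 * Lf) * ‖Δ‖ ^ 2 = 1 / (2 * Lf) * ‖Δ‖ ^ 2 := by
    field_simp; ring
  linarith [h1, h2, h5, h6, h7]

/-- interpolation inequality, cleared form -/
lemma interp2 (hfconv : ConvexOn ℝ Set.univ f) (hfgrad : ∀ z, HasGradientAt f (f' z) z)
    (hflip : ∀ z w, ‖f' z - f' w‖ ≤ Lf * ‖z - w‖) (hLf : 0 < Lf) (a b : Euc n) :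
    2*Lf*(f a) + 2*Lf*⟪f' a, b - a⟫_ℝ + ‖f' b - f' a‖^2 ≤ 2*Lf*(f b) := by
  have h1 := interp_ineq hfconv hfgrad hflip hLf a b
  have h2 := mul_le_mul_of_nonneg_left h1 (by positivity : (0:ℝ) ≤ 2*Lf)
  have h3 : 2*Lf*(1/(2*Lf)*‖f' b - f' a‖^2) = ‖f' b - f' a‖^2 := by
    field_simp
  nlinarith [h2, h3]

end Lemmas

/-- core SOS inequality, cleared form -/
lemma core2 {n : ℕ} (Lf lam : ℝ) (hLf : 0 < Lf) (hlam : 0 < lam) (e d z : Euc n) :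
    8*lam*Lf*(Lf+2*lam) * (Lf * ⟪e, d⟫_ℝ + 2*lam * ⟪e, z⟫_ℝ) ≤
      4*lam*Lf*(Lf+4*lam) * ‖e‖^2 + 4*lam*Lf^2*(Lf+2*lam)^2 * ⟪d, z⟫_ℝ
      + 4*lam^2*Lf*(Lf+2*lam)^2 * ‖z‖^2 + Lf^3*(Lf+2*lam)^2 * ‖d‖^2 := by
  set v := ((Lf + 2*lam) * Lf) • d + ((Lf + 2*lam) * (2*lam)) • z - (4*lam) • e with hv
  have key : 4*lam*Lf*(Lf+4*lam) * ‖e‖^2 + 4*lam*Lf^2*(Lf+2*lam)^2 * ⟪d, z⟫_ℝ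
      + 4*lam^2*Lf*(Lf+2*lam)^2 * ‖z‖^2 + Lf^3*(Lf+2*lam)^2 * ‖d‖^2
      - 8*lam*Lf*(Lf+2*lam) * (Lf * ⟪e, d⟫_ℝ + 2*lam * ⟪e, z⟫_ℝ)
      = 4*lam*Lf^2 * ‖e‖^2 + Lf * ‖v‖^2 := by
    rw [hv]
    simp only [← real_inner_self_eq_norm_sq]
    simp only [inner_sub_left, inner_sub_right, inner_add_left, inner_add_right,
      real_inner_smul_left, real_inner_smul_right]
    rw [real_inner_comm d z, real_inner_comm d e, real_inner_comm z e]
    ring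
  nlinarith [key, mul_nonneg (le_of_lt hLf) (sq_nonneg ‖v‖),
    mul_nonneg (by positivity : (0:ℝ) ≤ 4*lam*Lf^2) (sq_nonneg ‖e‖)]

/-- elimination of the middle gradient, cleared form -/
lemma h4quad {n : ℕ} (Lf lam : ℝ) (hLf : 0 < Lf) (hlam : 0 < lam) (gp gy gq : Euc n) :
    8*lam^2*Lf * ‖gp - gy‖^2 ≤
      4*lam*Lf*(Lf+2*lam) * ‖gq - gy‖^2 + 8*lam^2*(Lf+2*lam) * ‖gq - gp‖^2 := by
  set v := Lf • (gq - gy) + (2*lam) • (gq - gp) with hv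
  have key : 4*lam*Lf*(Lf+2*lam) * ‖gq - gy‖^2 + 8*lam^2*(Lf+2*lam) * ‖gq - gp‖^2
      - 8*lam^2*Lf * ‖gp - gy‖^2 = 4*lam * ‖v‖^2 := by
    rw [hv]
    simp only [← real_inner_self_eq_norm_sq]
    simp only [inner_sub_left, inner_sub_right, inner_add_left, inner_add_right,
      real_inner_smul_left, real_inner_smul_right]
    rw [real_inner_comm gq gy, real_inner_comm gq gp, real_inner_comm gp gy]
    ring
  nlinarith [key, mul_nonneg (by positivity : (0:ℝ) ≤ 4*lam) (sq_nonneg ‖v‖)]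

section prox
variable {n : ℕ} {g : Euc n → EReal} {P : ℝ → Euc n → Euc n} {α : ℝ}

lemma prox_min (hP : IsProx g P) (hα : 0 < α) (w : Euc n) :
    ∀ y, g (P α w) + ((1/(2*α) * ‖w - P α w‖^2 : ℝ) : EReal)
      ≤ g y + ((1/(2*α) * ‖w - y‖^2 : ℝ) : EReal) :=
  ((hP α hα w (P α w)).mp rfl)

lemma prox_ne_top (hg : ProperE g) (hP : IsProx g P) (hα : 0 < α) (w : Euc n) :
    g (P α w) ≠ ⊤ := by
  obtain ⟨x0, hx0⟩ := hg.2
  have h := prox_min hP hα w x0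
  intro htop
  rw [htop] at h
  have hlt : g x0 + ((1/(2*α) * ‖w - x0‖^2 : ℝ) : EReal) < ⊤ :=
    EReal.add_lt_top hx0 (EReal.coe_ne_top _)
  rw [EReal.top_add_of_ne_bot (EReal.coe_ne_bot _)] at h
  exact absurd (lt_of_le_of_lt h hlt) (lt_irrefl _)

/-- real-valued minimality -/
lemma prox_min_real (hg : ProperE g) (hP : IsProx g P) (hα : 0 < α) (w z : Euc n)
    (hz : g z ≠ ⊤) :
    (g (P α w)).toReal + 1/(2*α) * ‖w - P α w‖^2 ≤ (g z).toReal + 1/(2*α) * ‖w - z‖^2 := by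
  have h := prox_min hP hα w z
  set p := P α w
  have hpt : g p ≠ ⊤ := prox_ne_top hg hP hα w
  have hpb : g p ≠ ⊥ := hg.1 p
  have hzb : g z ≠ ⊥ := hg.1 z
  rw [← EReal.coe_toReal hpt hpb, ← EReal.coe_toReal hz hzb] at h
  rw [← EReal.coe_add, ← EReal.coe_add] at h
  exact_mod_cast h

/-- subgradient inequality at the prox point -/
lemma prox_subgrad (hg : ProperE g) (hgconv : ConvexEReal g) (hP : IsProx g P) (hα : 0 < α)
    (w z : Euc n) (hz : g z ≠ ⊤) :
    (g (P α w)).toReal + 1/α * ⟪w - P α w, z - P α w⟫_ℝ ≤ (g z).toReal := by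
  set p := P α w with hp
  have key : ∀ t : ℝ, t ∈ Set.Ioc (0:ℝ) 1 →
      (g p).toReal + 1/α * ⟪w - p, z - p⟫_ℝ ≤ (g z).toReal + 1/(2*α) * t * ‖z - p‖^2 := by
    intro t ht
    set zt := (1 - t) • p + t • z with hzt
    have hpt : g p ≠ ⊤ := prox_ne_top hg hP hα w
    have hconv := hgconv p z (1 - t) t (by linarith [ht.2]) (le_of_lt ht.1) (by ring)
    rw [← hzt] at hconv
    have hrhs : ((1 - t : ℝ) : EReal) * g p + ((t : ℝ) : EReal) * g z
        = (((1 - t) * (g p).toReal + t * (g z).toReal : ℝ) : EReal) := by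
      conv_lhs => rw [← EReal.coe_toReal hpt (hg.1 p), ← EReal.coe_toReal hz (hg.1 z)]
      rw [← EReal.coe_mul, ← EReal.coe_mul, ← EReal.coe_add]
    rw [hrhs] at hconv
    have hzttop : g zt ≠ ⊤ := by
      intro htop
      rw [htop] at hconv
      exact absurd (lt_of_le_of_lt hconv (EReal.coe_lt_top _)) (lt_irrefl _)
    have hmin := prox_min_real hg hP hα w zt hzttop
    rw [← hp] at hmin
    have hconvR : (g zt).toReal ≤ (1 - t) * (g p).toReal + t * (g z).toReal := by
      calc (g zt).toReal ≤ (((1 - t) * (g p).toReal + t * (g z).toReal : ℝ) : EReal).toReal :=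
            EReal.toReal_le_toReal hconv (hg.1 zt) (EReal.coe_ne_top _)
        _ = (1 - t) * (g p).toReal + t * (g z).toReal := EReal.toReal_coe _
    have hwzt : w - zt = (w - p) - t • (z - p) := by
      rw [hzt]; rw [sub_smul, one_smul, smul_sub]; abel
    have hnorm : ‖w - zt‖^2 = ‖w - p‖^2 - 2 * (t * ⟪w - p, z - p⟫_ℝ) + t^2 * ‖z - p‖^2 := by
      rw [hwzt, norm_sub_sq_real, real_inner_smul_right, norm_smul, Real.norm_eq_abs,
        mul_pow, sq_abs]
    rw [hnorm] at hmin
    have hdiv : t * ((g p).toReal + 1/α * ⟪w - p, z - p⟫_ℝ)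
        ≤ t * ((g z).toReal + 1/(2*α) * t * ‖z - p‖^2) := by
      have hexp : t * ((g p).toReal + 1/α * ⟪w - p, z - p⟫_ℝ)
          = t * (g p).toReal + 1/(2*α) * (2 * (t * ⟪w - p, z - p⟫_ℝ)) := by
        field_simp
      have hexp2 : t * ((g z).toReal + 1/(2*α) * t * ‖z - p‖^2)
          = t * (g z).toReal + 1/(2*α) * (t^2 * ‖z - p‖^2) := by ring
      rw [hexp, hexp2]
      nlinarith [hmin, hconvR]
    exact (mul_le_mul_iff_right₀ ht.1).mp hdiv
  have hfinal : ∀ ε : ℝ, 0 < ε →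
      (g p).toReal + 1/α * ⟪w - p, z - p⟫_ℝ ≤ (g z).toReal + ε := by
    intro ε hε
    have hc : 0 ≤ 1/(2*α) * ‖z - p‖^2 := by positivity
    set t := min 1 (ε / (1/(2*α) * ‖z - p‖^2 + 1)) with htdef
    have htpos : 0 < t := by
      apply lt_min one_pos
      positivity
    have ht1 : t ≤ 1 := min_le_left _ _
    have hk := key t ⟨htpos, ht1⟩
    have hbound : 1/(2*α) * t * ‖z - p‖^2 ≤ ε := by
      have h1 : t ≤ ε / (1/(2*α) * ‖z - p‖^2 + 1) := min_le_right _ _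
      have h2 : 0 < 1/(2*α) * ‖z - p‖^2 + 1 := by positivity
      calc 1/(2*α) * t * ‖z - p‖^2 = t * (1/(2*α) * ‖z - p‖^2) := by ring
        _ ≤ (ε / (1/(2*α) * ‖z - p‖^2 + 1)) * (1/(2*α) * ‖z - p‖^2 + 1) := by
            apply mul_le_mul h1 (by linarith) hc (by positivity)
        _ = ε := by field_simp
    linarith
  exact le_of_forall_pos_le_add hfinal
end prox

set_option maxHeartbeats 2000000 in
/-- master per-step descent inequality -/
lemma master {n : ℕ} (f : Euc n → ℝ) (f' : Euc n → Euc n) (Lf : ℝ) (hLf : 0 < Lf)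
    (hfconv : ConvexOn ℝ Set.univ f)
    (hfgrad : ∀ z, HasGradientAt f (f' z) z)
    (hflip : ∀ z w, ‖f' z - f' w‖ ≤ Lf * ‖z - w‖)
    (g : Euc n → EReal) (hgproper : ProperE g) (hgconv : ConvexEReal g)
    (h : Euc n → ℝ)
    (P : ℝ → Euc n → Euc n) (hP : IsProx g P)
    (lam δ mu tau : ℝ) (hlam : 0 < lam) (hδ : 0 < δ)
    (hmu : mu = 2/(2*lam + Lf)) (htau : tau = Lf^2 * δ^2 / (8*lam))
    (p q r y η : Euc n) (hηs : ∀ z, h q + ⟪η, z - q⟫_ℝ ≤ h z)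
    (hpdef : p = P mu ((1 - mu*lam) • y - mu • f' y + (mu*lam) • q + mu • η))
    (htt : ‖p - y‖ ≤ δ * ‖r - q‖) (hq : g q ≠ ⊤) :
    f p - h p + (g p).toReal + lam/2 * ‖p - q‖^2
      ≤ f q - h q + (g q).toReal + tau * ‖r - q‖^2 := by
  have hν : (0:ℝ) < Lf + 2*lam := by positivity
  have hν' : (2*lam + Lf) ≠ 0 := by positivity
  have hmupos : 0 < mu := by rw [hmu]; positivity
  set w : Euc n := (1 - mu*lam) • y - mu • f' y + (mu*lam) • q + mu • η with hw
  have base := prox_subgrad hgproper hgconv hP hmupos w q hq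
  rw [← hpdef] at base
  have hvec : (Lf + 2*lam) • (w - p) =
      Lf • (y - p) + (2*lam) • (q - p) + (2:ℝ) • η - (2:ℝ) • f' y := by
    rw [hw, hmu]
    match_scalars <;> field_simp <;> ring
  have hinner : 1/mu * ⟪w - p, q - p⟫_ℝ =
      Lf/2 * ⟪y - p, q - p⟫_ℝ + lam * ‖q - p‖^2 + ⟪η, q - p⟫_ℝ - ⟪f' y, q - p⟫_ℝ := by
    have h1 : 1/mu = (Lf + 2*lam)/2 := by rw [hmu]; field_simp; ring
    have h5 : (Lf + 2*lam) * ⟪w - p, q - p⟫_ℝ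
        = Lf * ⟪y - p, q - p⟫_ℝ + 2*lam * ‖q - p‖^2
          + 2 * ⟪η, q - p⟫_ℝ - 2 * ⟪f' y, q - p⟫_ℝ := by
      rw [← real_inner_smul_left, hvec]
      simp only [inner_add_left, inner_sub_left, real_inner_smul_left]
      rw [show ⟪q, q-p⟫_ℝ - ⟪p, q-p⟫_ℝ = ‖q-p‖^2 by
        rw [← inner_sub_left, real_inner_self_eq_norm_sq]]
    rw [h1]
    linarith [h5]
  have base2 : (g p).toReal + (Lf/2 * ⟪y - p, q - p⟫_ℝ + lam * ‖q - p‖^2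
      + ⟪η, q - p⟫_ℝ - ⟪f' y, q - p⟫_ℝ) ≤ (g q).toReal := by
    linarith [base, hinner.symm.le, hinner.le]
  have S2 := hηs p
  have A := interp2 hfconv hfgrad hflip hLf p y
  have B := interp2 hfconv hfgrad hflip hLf y q
  have C := interp2 hfconv hfgrad hflip hLf p q
  have E3 := mul_le_mul_of_nonneg_left A (by positivity : (0:ℝ) ≤ 4*lam*Lf*(Lf+2*lam))
  have E4 := mul_le_mul_of_nonneg_left B (by positivity : (0:ℝ) ≤ 4*lam*Lf*(Lf+2*lam))
  have E5 := mul_le_mul_of_nonneg_left C (by positivity : (0:ℝ) ≤ 8*lam^2*(Lf+2*lam))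
  have E6 := h4quad Lf lam hLf hlam (f' p) (f' y) (f' q)
  have E7 := core2 Lf lam hLf hlam (f' p - f' y) (p - y) (p - q)
  have E8 : Lf^3*(Lf+2*lam)^2 * ‖p - y‖^2 ≤ 8*lam*Lf*(Lf+2*lam)^2 * (tau * ‖r - q‖^2) := by
    have h6 : ‖p - y‖^2 ≤ δ^2 * ‖r - q‖^2 := by
      nlinarith [htt, norm_nonneg (p - y), norm_nonneg (r - q), hδ]
    have h8 : Lf^3*(Lf+2*lam)^2 * ‖p - y‖^2 ≤ Lf^3*(Lf+2*lam)^2 * (δ^2*‖r - q‖^2) :=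
      mul_le_mul_of_nonneg_left h6 (by positivity)
    have h9 : Lf^3*(Lf+2*lam)^2 * (δ^2*‖r - q‖^2) = 8*lam*Lf*(Lf+2*lam)^2*(tau*‖r - q‖^2) := by
      rw [htau]; field_simp
    linarith
  have E1 := mul_le_mul_of_nonneg_left base2 (by positivity : (0:ℝ) ≤ 8*lam*Lf*(Lf+2*lam)^2)
  have E2 := mul_le_mul_of_nonneg_left S2 (by positivity : (0:ℝ) ≤ 8*lam*Lf*(Lf+2*lam)^2)
  have hM : (0:ℝ) < 8*lam*Lf*(Lf+2*lam)^2 := by positivity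
  rw [← mul_le_mul_iff_right₀ hM]
  simp only [← real_inner_self_eq_norm_sq] at E1 E2 E3 E4 E5 E6 E7 E8 ⊢
  simp only [inner_sub_left, inner_sub_right] at E1 E2 E3 E4 E5 E6 E7 E8 ⊢
  linarith [E1, E2, E3, E4, E5, E6, E7, E8,
    real_inner_comm (p) (q), real_inner_comm (p) (r), real_inner_comm (p) (y),
    real_inner_comm (p) (η), real_inner_comm (p) (f' p), real_inner_comm (p) (f' q),
    real_inner_comm (p) (f' y), real_inner_comm (q) (r), real_inner_comm (q) (y),
    real_inner_comm (q) (η), real_inner_comm (q) (f' p), real_inner_comm (q) (f' q),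
    real_inner_comm (q) (f' y), real_inner_comm (r) (y), real_inner_comm (r) (η),
    real_inner_comm (r) (f' p), real_inner_comm (r) (f' q), real_inner_comm (r) (f' y),
    real_inner_comm (y) (η), real_inner_comm (y) (f' p), real_inner_comm (y) (f' q),
    real_inner_comm (y) (f' y), real_inner_comm (η) (f' p), real_inner_comm (η) (f' q),
    real_inner_comm (η) (f' y), real_inner_comm (f' p) (f' q), real_inner_comm (f' p) (f' y),
    real_inner_comm (f' q) (f' y)]

set_option maxHeartbeats 1000000 in
/-- For a cDCA sequence with `x⁰ ∈ dom g` and `F = f + g - h`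
level-bounded, `lim F(xᵏ)` and `lim E(xᵏ, x^{k-1})` exist, are equal, and for every
accumulation point `x̂` of `(xᵏ)` both equal `F(x̂)`.
(Here `x 0 = x⁻¹`, `x (k+1) = xᵏ`, and `E(a, b) = F(a) + τ‖a - b‖²`.) -/
theorem stmt9 {n : ℕ}
    (f : Euc n → ℝ) (f' : Euc n → Euc n) (Lf : ℝ) (hLf : 0 < Lf)
    (hfconv : ConvexOn ℝ Set.univ f)
    (hfgrad : ∀ z, HasGradientAt f (f' z) z)
    (hflip : ∀ z w, ‖f' z - f' w‖ ≤ Lf * ‖z - w‖)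
    (g : Euc n → EReal) (hgproper : ProperE g) (hgconv : ConvexEReal g)
    (hglsc : LowerSemicontinuous g)
    (h : Euc n → ℝ) (hhconv : ConvexOn ℝ Set.univ h)
    (F : Euc n → EReal) (hF : ∀ z, F z = ((f z - h z : ℝ) : EReal) + g z)
    (P : ℝ → Euc n → Euc n) (hP : IsProx g P)
    (lam δ mu tau : ℝ) (hlam : 0 < lam) (hδ : δ ∈ Set.Ioo 0 (2*lam/Lf))
    (hmu : mu = 2/(2*lam + Lf)) (htau : tau = Lf^2 * δ^2 / (8*lam))
    (EE : Euc n → Euc n → EReal) (hEE : ∀ a b, EE a b = F a + ((tau * ‖a - b‖^2 : ℝ) : EReal))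
    (x : ℕ → Euc n) (hx : IsCDCA f' h P lam mu δ x) (hx0 : g (x 1) ≠ ⊤)
    (hlevel : ∀ r : ℝ, Bornology.IsBounded {z : Euc n | F z ≤ (r : EReal)}) :
    ∃ L : EReal,
      Tendsto (fun k : ℕ => F (x (k+1))) atTop (nhds L) ∧
      Tendsto (fun k : ℕ => EE (x (k+1)) (x k)) atTop (nhds L) ∧
      ∀ (xhat : Euc n) (φ : ℕ → ℕ), StrictMono φ →
        Tendsto (fun l : ℕ => x (φ l)) atTop (nhds xhat) → F xhat = L := by
  obtain ⟨hδ0, hδub⟩ := hδ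
  choose η hηmem y hy1 hy2 using hx
  have hν : (0:ℝ) < 2*lam + Lf := by positivity
  have hmupos : 0 < mu := by rw [hmu]; positivity
  have htau0 : 0 < tau := by rw [htau]; positivity
  have htauhalf : tau < lam/2 := by
    rw [htau]
    rw [div_lt_iff₀ (by positivity : (0:ℝ) < 8*lam)]
    have hd : δ * Lf < 2*lam := by
      rw [lt_div_iff₀ hLf] at hδub; linarith
    have h2 : (δ*Lf)*(δ*Lf) < (2*lam)*(2*lam) :=
      mul_self_lt_mul_self (by positivity) hd
    nlinarith [h2]
  -- continuity
  have hfc : Continuous f := by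
    rw [continuous_iff_continuousAt]
    exact fun z => ((hfgrad z).differentiableAt).continuousAt
  have hhc : Continuous h := by
    rw [← continuousOn_univ]
    exact hhconv.continuousOn isOpen_univ
  -- finiteness along iterates
  have gne : ∀ k, g (x (k+1)) ≠ ⊤ := by
    intro k
    cases k with
    | zero => exact hx0
    | succ m => rw [hy1 m]; exact prox_ne_top hgproper hP hmupos _
  obtain ⟨Fr, hFr⟩ : ∃ v : ℕ → ℝ, ∀ k, v k =
      (f (x (k+1)) - h (x (k+1))) + (g (x (k+1))).toReal := ⟨_, fun _ => rfl⟩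
  obtain ⟨Er, hEr⟩ : ∃ v : ℕ → ℝ, ∀ k, v k = Fr k + tau * ‖x (k+1) - x k‖^2 :=
    ⟨_, fun _ => rfl⟩
  have hFcoe : ∀ k, F (x (k+1)) = ((Fr k : ℝ) : EReal) := by
    intro k
    rw [hF, hFr]
    conv_lhs => rw [← EReal.coe_toReal (gne k) (hgproper.1 _)]
    rw [← EReal.coe_add]
  have hEcoe : ∀ k, EE (x (k+1)) (x k) = ((Er k : ℝ) : EReal) := by
    intro k
    rw [hEE, hFcoe, ← EReal.coe_add, hEr]
  -- master inequality
  have hmast : ∀ k, Fr (k+1) + lam/2 * ‖x (k+2) - x (k+1)‖^2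
      ≤ Fr k + tau * ‖x k - x (k+1)‖^2 := by
    intro k
    have hm := master f f' Lf hLf hfconv hfgrad hflip g hgproper hgconv h P hP
      lam δ mu tau hlam hδ0 hmu htau (x (k+2)) (x (k+1)) (x k) (y k) (η k)
      (hηmem k) (hy1 k) (hy2 k) (gne k)
    rw [hFr (k+1), hFr k]
    linarith [hm]
  have hEdec : ∀ k, Er (k+1) + (lam/2 - tau) * ‖x (k+2) - x (k+1)‖^2 ≤ Er k := by
    intro k
    have h1 := hmast k
    rw [norm_sub_rev (x k) (x (k+1))] at h1
    rw [hEr (k+1), hEr k]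
    linarith
  have hEanti : Antitone Er := by
    apply antitone_nat_of_succ_le
    intro k
    have hnn := mul_nonneg (le_of_lt (sub_pos.mpr htauhalf)) (sq_nonneg ‖x (k+2) - x (k+1)‖)
    linarith [hEdec k, hnn]
  have hFrleEr : ∀ k, Fr k ≤ Er k := by
    intro k
    rw [hEr k]
    nlinarith [sq_nonneg ‖x (k+1) - x k‖, htau0]
  -- bounded iterates
  obtain ⟨R, hR⟩ := (hlevel (Er 0)).subset_closedBall 0
  have hxS : ∀ k, x (k+1) ∈ Metric.closedBall 0 R := by
    intro k
    apply hR
    show F (x (k+1)) ≤ _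
    rw [hFcoe k]
    exact EReal.coe_le_coe_iff.mpr (le_trans (hFrleEr k) (hEanti (Nat.zero_le k)))
  set R' : ℝ := max R ‖x 0‖ with hR'def
  have hxbd : ∀ k, ‖x k‖ ≤ R' := by
    intro k
    cases k with
    | zero => exact le_max_right _ _
    | succ m =>
      have := hxS m
      rw [Metric.mem_closedBall, dist_zero_right] at this
      exact le_trans this (le_max_left _ _)
  -- lower boundedness of Er
  have hbdd : BddBelow (Set.range Er) := by
    by_contra hnb
    rw [not_bddBelow_iff] at hnb
    -- bound |f - h| on the closed ball
    obtain ⟨M, hM⟩ := (isCompact_closedBall (0:Euc n) R).exists_bound_of_continuousOn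
      ((hfc.sub hhc).continuousOn)
    -- convergent subsequence of the iterates
    obtain ⟨a, _, φ0, hφ0, hconv0⟩ := tendsto_subseq_of_bounded
      (Metric.isBounded_closedBall (x := (0:Euc n)) (r := R)) hxS
    obtain ⟨ba, hba⟩ : ∃ b : ℝ, ((b:ℝ):EReal) < g a := by
      rcases eq_or_ne (g a) ⊤ with htop | hne
      · exact ⟨0, htop ▸ EReal.coe_lt_top 0⟩
      · refine ⟨(g a).toReal - 1, ?_⟩
        conv_rhs => rw [← EReal.coe_toReal hne (hgproper.1 a)]
        exact_mod_cast sub_one_lt _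
    have hev := hconv0.eventually (hglsc a ba hba)
    rw [eventually_atTop] at hev
    obtain ⟨l0, hl0⟩ := hev
    obtain ⟨v, ⟨k1, rfl⟩, hk1⟩ := hnb (ba - M)
    set l := max l0 k1 with hldef
    have h1 : ba < (g (x (φ0 l + 1))).toReal := by
      have := hl0 l (le_max_left _ _)
      simp only [Function.comp] at this
      rw [← EReal.coe_toReal (gne (φ0 l)) (hgproper.1 _)] at this
      exact_mod_cast this
    have h2 : Er (φ0 l) ≤ Er k1 := hEanti (le_trans (le_max_right l0 k1) (hφ0.le_apply))
    have h3 : (g (x (φ0 l + 1))).toReal ≤ Er (φ0 l) + M := by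
      have h4 := hFrleEr (φ0 l)
      rw [hFr (φ0 l)] at h4
      have h5 : ‖f (x (φ0 l + 1)) - h (x (φ0 l + 1))‖ ≤ M := hM _ (hxS (φ0 l))
      rw [Real.norm_eq_abs] at h5
      have := abs_le.mp h5
      linarith [this.1]
    linarith
  set L0 : ℝ := ⨅ k, Er k with hL0def
  have hErlim : Tendsto Er atTop (𝓝 L0) := tendsto_atTop_ciInf hEanti hbdd
  -- successive differences vanish
  have hρ : (0:ℝ) < lam/2 - tau := sub_pos.mpr htauhalf
  have hsq : Tendsto (fun k => ‖x (k+2) - x (k+1)‖^2) atTop (𝓝 0) := by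
    have hE1 : Tendsto (fun k => Er (k+1)) atTop (𝓝 L0) :=
      hErlim.comp (tendsto_add_atTop_nat 1)
    have hup : Tendsto (fun k => (Er k - Er (k+1)) / (lam/2 - tau)) atTop (𝓝 0) := by
      have := (hErlim.sub hE1).div_const (lam/2 - tau)
      simpa using this
    apply tendsto_of_tendsto_of_tendsto_of_le_of_le tendsto_const_nhds hup
    · intro k; exact sq_nonneg _
    · intro k
      rw [le_div_iff₀ hρ]
      have := hEdec k
      linarith
  have hFrlim : Tendsto Fr atTop (𝓝 L0) := by
    rw [← tendsto_add_atTop_iff_nat 1]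
    have h1 : Tendsto (fun k => Er (k+1) - tau * ‖x (k+2) - x (k+1)‖^2) atTop (𝓝 (L0 - tau * 0)) :=
      (hErlim.comp (tendsto_add_atTop_nat 1)).sub (hsq.const_mul tau)
    rw [mul_zero, sub_zero] at h1
    apply h1.congr
    intro k
    rw [hEr (k+1)]
    ring
  refine ⟨((L0 : ℝ) : EReal), ?_, ?_, ?_⟩
  · have : Tendsto (fun k => ((Fr k : ℝ) : EReal)) atTop (𝓝 ((L0 : ℝ) : EReal)) :=
      (continuous_coe_real_ereal.tendsto _).comp hFrlim
    exact this.congr (fun k => (hFcoe k).symm)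
  · have : Tendsto (fun k => ((Er k : ℝ) : EReal)) atTop (𝓝 ((L0 : ℝ) : EReal)) :=
      (continuous_coe_real_ereal.tendsto _).comp hErlim
    exact this.congr (fun k => (hEcoe k).symm)
  · intro xhat φ hφ hconv
    -- part (i): F xhat ≤ L0 via lower semicontinuity
    obtain ⟨ψ, hψ1⟩ : ∃ ψ : ℕ → ℕ, ∀ l, ψ l + 1 = φ (l+1) := by
      refine ⟨fun l => φ (l+1) - 1, fun l => ?_⟩
      have h1 : l + 1 ≤ φ (l+1) := hφ.le_apply
      show φ (l+1) - 1 + 1 = φ (l+1)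
      omega
    have hψtop : Tendsto ψ atTop atTop := by
      apply tendsto_atTop_mono (f := id) ?_ tendsto_id
      intro l
      have h1 : l + 1 ≤ φ (l+1) := hφ.le_apply
      have h2 := hψ1 l
      simp only [id]
      omega
    have hxψ : Tendsto (fun l => x (ψ l + 1)) atTop (𝓝 xhat) := by
      have heq : (fun l => x (ψ l + 1)) = fun l => x (φ (l+1)) := funext fun l => by rw [hψ1]
      rw [heq]
      have := hconv.comp (tendsto_add_atTop_nat 1)
      simpa [Function.comp_def] using this
    have hFrψ : Tendsto (fun l => Fr (ψ l)) atTop (𝓝 L0) := by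
      have := hFrlim.comp hψtop
      simpa [Function.comp_def] using this
    have hcψ : Tendsto (fun l => f (x (ψ l + 1)) - h (x (ψ l + 1))) atTop
        (𝓝 (f xhat - h xhat)) := by
      have := ((hfc.sub hhc).tendsto xhat).comp hxψ
      simpa [Function.comp_def] using this
    have hgψ : Tendsto (fun l => (g (x (ψ l + 1))).toReal) atTop
        (𝓝 (L0 - (f xhat - h xhat))) := by
      have heq : (fun l => (g (x (ψ l + 1))).toReal)
          = fun l => Fr (ψ l) - (f (x (ψ l + 1)) - h (x (ψ l + 1))) := by
        funext l; rw [hFr (ψ l)]; ring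
      rw [heq]
      exact hFrψ.sub hcψ
    have hgle : g xhat ≤ ((L0 - (f xhat - h xhat) : ℝ) : EReal) := by
      by_contra hlt
      push_neg at hlt
      obtain ⟨b, hb1, hb2⟩ : ∃ b : ℝ, L0 - (f xhat - h xhat) < b ∧ ((b:ℝ):EReal) < g xhat := by
        rcases eq_or_ne (g xhat) ⊤ with htop | hne
        · exact ⟨L0 - (f xhat - h xhat) + 1, by linarith, htop ▸ EReal.coe_lt_top _⟩
        · have hlt2 : L0 - (f xhat - h xhat) < (g xhat).toReal := by
            rw [← EReal.coe_toReal hne (hgproper.1 xhat)] at hlt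
            exact_mod_cast hlt
          refine ⟨(L0 - (f xhat - h xhat) + (g xhat).toReal)/2, by linarith, ?_⟩
          conv_rhs => rw [← EReal.coe_toReal hne (hgproper.1 xhat)]
          exact_mod_cast (by linarith : (L0 - (f xhat - h xhat) + (g xhat).toReal)/2
            < (g xhat).toReal)
      have hev2 : ∀ᶠ l in atTop, ((b:ℝ):EReal) < g (x (ψ l + 1)) :=
        hxψ.eventually (hglsc xhat _ hb2)
      have hev3 : ∀ᶠ l in atTop, (g (x (ψ l + 1))).toReal < b :=
        hgψ.eventually (eventually_lt_nhds hb1)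
      obtain ⟨l, hla, hlb⟩ := (hev2.and hev3).exists
      rw [← EReal.coe_toReal (gne (ψ l)) (hgproper.1 _)] at hla
      have : b < (g (x (ψ l + 1))).toReal := by exact_mod_cast hla
      linarith
    have hFle : F xhat ≤ ((L0:ℝ):EReal) := by
      rw [hF]
      calc ((f xhat - h xhat : ℝ):EReal) + g xhat
          ≤ ((f xhat - h xhat : ℝ):EReal) + ((L0 - (f xhat - h xhat) : ℝ):EReal) :=
            add_le_add_right hgle _
        _ = ((L0:ℝ):EReal) := by rw [← EReal.coe_add]; congr 1; ring
    -- part (ii): L0 ≤ F xhat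
    have hgxt : g xhat ≠ ⊤ := by
      intro htop
      rw [hF xhat, htop, EReal.add_top_of_ne_bot (EReal.coe_ne_bot _)] at hFle
      exact absurd hFle (EReal.coe_lt_top L0).not_ge
    have hmla : mu * lam ≤ 1 := by
      rw [hmu, div_mul_eq_mul_div, div_le_one hν]; linarith
    have hmlnn : 0 ≤ 1 - mu*lam := by linarith
    have hR'0 : 0 ≤ R' := le_trans (norm_nonneg (x 0)) (le_max_right _ _)
    obtain ⟨zM, hzM_mem, hzM⟩ := (isCompact_closedBall (0:Euc n) (R'+1)).exists_isMaxOn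
      ⟨0, by simp; linarith⟩ hhc.continuousOn
    obtain ⟨zm, hzm_mem, hzm⟩ := (isCompact_closedBall (0:Euc n) R').exists_isMinOn
      ⟨x 0, by rw [Metric.mem_closedBall, dist_zero_right]; exact le_max_right _ _⟩
      hhc.continuousOn
    have hCh0 : 0 ≤ h zM - h zm := by
      have h1 : h zm ≤ h (x 0) := hzm (by
        rw [Metric.mem_closedBall, dist_zero_right]; exact le_max_right _ _)
      have h2 : h (x 0) ≤ h zM := hzM (by
        rw [Metric.mem_closedBall, dist_zero_right]
        calc ‖x 0‖ ≤ R' := le_max_right _ _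
          _ ≤ R' + 1 := by linarith)
      linarith
    have hηbd : ∀ k, ‖η k‖ ≤ h zM - h zm := by
      intro k
      have hq1 : x (k+1) ∈ Metric.closedBall (0:Euc n) R' := by
        rw [Metric.mem_closedBall, dist_zero_right]; exact hxbd (k+1)
      rcases eq_or_ne (η k) 0 with hz | hz
      · rw [hz, norm_zero]; exact hCh0
      · have hnz : ‖η k‖ ≠ 0 := norm_ne_zero_iff.mpr hz
        have hmem := hηmem k (x (k+1) + ‖η k‖⁻¹ • η k)
        have hip : ⟪η k, (x (k+1) + ‖η k‖⁻¹ • η k) - x (k+1)⟫_ℝ = ‖η k‖ := by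
          simp only [add_sub_cancel_left]
          rw [real_inner_smul_right, real_inner_self_eq_norm_sq]
          field_simp
        rw [hip] at hmem
        have hun : ‖(‖η k‖⁻¹ • η k)‖ = 1 := by
          rw [norm_smul, Real.norm_eq_abs, abs_inv, abs_of_nonneg (norm_nonneg _)]
          field_simp
        have hz2 : x (k+1) + ‖η k‖⁻¹ • η k ∈ Metric.closedBall (0:Euc n) (R'+1) := by
          rw [Metric.mem_closedBall, dist_zero_right]
          calc ‖x (k+1) + ‖η k‖⁻¹ • η k‖ ≤ ‖x (k+1)‖ + ‖(‖η k‖⁻¹ • η k)‖ := norm_add_le _ _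
            _ ≤ R' + 1 := by rw [hun]; linarith [hxbd (k+1)]
        have h1 : h (x (k+1) + ‖η k‖⁻¹ • η k) ≤ h zM := hzM hz2
        have h2 : h zm ≤ h (x (k+1)) := hzm hq1
        linarith
    have hybd : ∀ k, ‖y k‖ ≤ R' + δ * (2*R') := by
      intro k
      have h1 : ‖y k‖ ≤ ‖x (k+2)‖ + ‖x (k+2) - y k‖ := by
        calc ‖y k‖ = ‖x (k+2) - (x (k+2) - y k)‖ := by congr 1; abel
          _ ≤ ‖x (k+2)‖ + ‖x (k+2) - y k‖ := norm_sub_le _ _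
      have h3 : ‖x k - x (k+1)‖ ≤ 2*R' :=
        le_trans (norm_sub_le _ _) (by linarith [hxbd k, hxbd (k+1)])
      have h4 : δ * ‖x k - x (k+1)‖ ≤ δ * (2*R') :=
        mul_le_mul_of_nonneg_left h3 (le_of_lt hδ0)
      linarith [hxbd (k+2), hy2 k]
    have hgradbd : ∀ k, ‖f' (y k)‖ ≤ ‖f' 0‖ + Lf * (R' + δ * (2*R')) := by
      intro k
      have h1 : ‖f' (y k) - f' 0‖ ≤ Lf * ‖y k - 0‖ := hflip _ _
      rw [sub_zero] at h1
      have h2 : ‖f' (y k)‖ ≤ ‖f' (y k) - f' 0‖ + ‖f' 0‖ := by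
        calc ‖f' (y k)‖ = ‖(f' (y k) - f' 0) + f' 0‖ := by congr 1; abel
          _ ≤ _ := norm_add_le _ _
      have h3 : Lf * ‖y k‖ ≤ Lf * (R' + δ * (2*R')) :=
        mul_le_mul_of_nonneg_left (hybd k) (le_of_lt hLf)
      linarith
    obtain ⟨W, hWval⟩ : ∃ W : ℝ, W = (R' + δ * (2*R')) + mu * (‖f' 0‖ + Lf * (R' + δ * (2*R')))
        + mu*lam*R' + mu*(h zM - h zm) := ⟨_, rfl⟩
    have hwbd : ∀ k,
        ‖(1 - mu*lam) • y k - mu • f' (y k) + (mu*lam) • x (k+1) + mu • η k‖ ≤ W := by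
      intro k
      have t1 : ‖(1 - mu*lam) • y k - mu • f' (y k) + (mu*lam) • x (k+1) + mu • η k‖
          ≤ ‖(1 - mu*lam) • y k‖ + ‖mu • f' (y k)‖ + ‖(mu*lam) • x (k+1)‖ + ‖mu • η k‖ := by
        calc ‖(1 - mu*lam) • y k - mu • f' (y k) + (mu*lam) • x (k+1) + mu • η k‖
            ≤ ‖(1 - mu*lam) • y k - mu • f' (y k) + (mu*lam) • x (k+1)‖ + ‖mu • η k‖ :=
              norm_add_le _ _
          _ ≤ ‖(1 - mu*lam) • y k - mu • f' (y k)‖ + ‖(mu*lam) • x (k+1)‖ + ‖mu • η k‖ := by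
              linarith [norm_add_le ((1 - mu*lam) • y k - mu • f' (y k)) ((mu*lam) • x (k+1))]
          _ ≤ _ := by
              linarith [norm_sub_le ((1 - mu*lam) • y k) (mu • f' (y k))]
      simp only [norm_smul, Real.norm_eq_abs] at t1
      rw [abs_of_nonneg hmlnn, abs_of_nonneg (le_of_lt hmupos),
        abs_of_nonneg (mul_nonneg (le_of_lt hmupos) (le_of_lt hlam))] at t1
      have b1 : (1 - mu*lam) * ‖y k‖ ≤ R' + δ * (2*R') := by
        calc (1 - mu*lam) * ‖y k‖ ≤ 1 * ‖y k‖ :=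
              mul_le_mul_of_nonneg_right (by linarith [mul_pos hmupos hlam]) (norm_nonneg _)
          _ = ‖y k‖ := one_mul _
          _ ≤ _ := hybd k
      have b2 : mu * ‖f' (y k)‖ ≤ mu * (‖f' 0‖ + Lf * (R' + δ * (2*R'))) :=
        mul_le_mul_of_nonneg_left (hgradbd k) (le_of_lt hmupos)
      have b3 : mu*lam * ‖x (k+1)‖ ≤ mu*lam*R' :=
        mul_le_mul_of_nonneg_left (hxbd (k+1))
          (mul_nonneg (le_of_lt hmupos) (le_of_lt hlam))
      have b4 : mu * ‖η k‖ ≤ mu * (h zM - h zm) :=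
        mul_le_mul_of_nonneg_left (hηbd k) (le_of_lt hmupos)
      rw [hWval]
      linarith
    have hmu2 : (0:ℝ) < 1/(2*mu) := by positivity
    have hC2 : ∀ k, (g (x (k + 2))).toReal ≤ (g xhat).toReal
        + 1/(2*mu) * ((2*W + 3*R' + ‖xhat‖) * ‖x (k+2) - xhat‖) := by
      intro k
      have hpm := prox_min_real hgproper hP hmupos
        ((1 - mu*lam) • y k - mu • f' (y k) + (mu*lam) • x (k+1) + mu • η k) xhat hgxt
      rw [← hy1 k] at hpm
      set wk := (1 - mu*lam) • y k - mu • f' (y k) + (mu*lam) • x (k+1) + mu • η k with hwk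
      have hb : ‖wk - x (k+2)‖ ≤ W + R' :=
        le_trans (norm_sub_le _ _) (by linarith [hwbd k, hxbd (k+2)])
      have hab : ‖wk - xhat‖ ≤ ‖wk - x (k+2)‖ + ‖x (k+2) - xhat‖ := by
        calc ‖wk - xhat‖ = ‖(wk - x (k+2)) + (x (k+2) - xhat)‖ := by congr 1; abel
          _ ≤ _ := norm_add_le _ _
      have hsq1 : ‖wk - xhat‖^2 ≤ (‖wk - x (k+2)‖ + ‖x (k+2) - xhat‖)^2 :=
        pow_le_pow_left₀ (norm_nonneg _) hab 2
      have ht1 : ‖x (k+2) - xhat‖ ≤ R' + ‖xhat‖ :=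
        le_trans (norm_sub_le _ _) (by linarith [hxbd (k+2)])
      have hquad : (‖wk - x (k+2)‖ + ‖x (k+2) - xhat‖)^2
          ≤ ‖wk - x (k+2)‖^2 + (2*W + 3*R' + ‖xhat‖) * ‖x (k+2) - xhat‖ := by
        nlinarith [mul_nonneg (sub_nonneg.mpr
          (by linarith : 2*‖wk - x (k+2)‖ + ‖x (k+2) - xhat‖ ≤ 2*W + 3*R' + ‖xhat‖))
          (norm_nonneg (x (k+2) - xhat))]
      have hfin : ‖wk - xhat‖^2
          ≤ ‖wk - x (k+2)‖^2 + (2*W + 3*R' + ‖xhat‖) * ‖x (k+2) - xhat‖ :=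
        le_trans hsq1 hquad
      have hmul := mul_le_mul_of_nonneg_left hfin (le_of_lt hmu2)
      linarith [hpm, hmul]
    have hFr2 : ∀ k, Fr (k+1) ≤ (f (x (k+2)) - h (x (k+2))) + (g xhat).toReal
        + 1/(2*mu) * ((2*W + 3*R' + ‖xhat‖) * ‖x (k+2) - xhat‖) := by
      intro k
      rw [hFr (k+1)]
      linarith [hC2 k]
    obtain ⟨κ, hκ⟩ : ∃ κ : ℕ → ℕ, ∀ l, κ l + 2 = φ (l+2) := by
      refine ⟨fun l => φ (l+2) - 2, fun l => ?_⟩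
      have h1 : l + 2 ≤ φ (l+2) := hφ.le_apply
      show φ (l+2) - 2 + 2 = φ (l+2)
      omega
    have hκtop : Tendsto (fun l => κ l + 1) atTop atTop := by
      apply tendsto_atTop_mono (f := id) ?_ tendsto_id
      intro l
      have h1 : l + 2 ≤ φ (l+2) := hφ.le_apply
      have h2 := hκ l
      simp only [id]
      omega
    have hxκ : Tendsto (fun l => x (κ l + 2)) atTop (𝓝 xhat) := by
      have heq : (fun l => x (κ l + 2)) = fun l => x (φ (l+2)) := funext fun l => by rw [hκ]
      rw [heq]
      have := hconv.comp (tendsto_add_atTop_nat 2)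
      simpa [Function.comp_def] using this
    have hlhs : Tendsto (fun l => Fr (κ l + 1)) atTop (𝓝 L0) := by
      have := hFrlim.comp hκtop
      simpa [Function.comp_def] using this
    have hnκ : Tendsto (fun l => ‖x (κ l + 2) - xhat‖) atTop (𝓝 0) := by
      have h1 : Tendsto (fun l => x (κ l + 2) - xhat) atTop (𝓝 (xhat - xhat)) :=
        hxκ.sub tendsto_const_nhds
      rw [sub_self] at h1
      simpa using h1.norm
    have hrhs : Tendsto (fun l => (f (x (κ l + 2)) - h (x (κ l + 2))) + (g xhat).toReal
        + 1/(2*mu) * ((2*W + 3*R' + ‖xhat‖) * ‖x (κ l + 2) - xhat‖)) atTop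
        (𝓝 ((f xhat - h xhat) + (g xhat).toReal + 1/(2*mu) * ((2*W + 3*R' + ‖xhat‖) * 0))) := by
      apply Tendsto.add
      · apply Tendsto.add
        · have := ((hfc.sub hhc).tendsto xhat).comp hxκ
          simpa [Function.comp_def] using this
        · exact tendsto_const_nhds
      · exact (hnκ.const_mul _).const_mul _
    have hL0le : L0 ≤ (f xhat - h xhat) + (g xhat).toReal := by
      have := le_of_tendsto_of_tendsto' hlhs hrhs (fun l => hFr2 (κ l))
      rw [mul_zero, mul_zero, add_zero] at this
      exact this
    have hFeq : F xhat = ((f xhat - h xhat + (g xhat).toReal : ℝ) : EReal) := by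
      rw [hF]
      conv_lhs => rw [← EReal.coe_toReal hgxt (hgproper.1 xhat)]
      rw [← EReal.coe_add]
    have h1 : f xhat - h xhat + (g xhat).toReal ≤ L0 := by
      rw [hFeq] at hFle
      exact_mod_cast hFle
    rw [hFeq]
    exact_mod_cast le_antisymm h1 hL0le
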